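/- Weak head reduction preserves and reflects evaluation: if M →_wh N then, for all memories S_A, T_A and every choice i, (S_A, M) ⇓ (T_A, i) if and only if (S_A, N) ⇓ (T_A, i). -/

import Mathlib

variable {Loc Ch : Type}

/-- FMC terms: variable, push `[N]a.M`, pop `a<x>.M` (de Bruijn binder),
choice `i`, case `M ; i -> N`, and loop `M^i`. -/
inductive Tm (Loc Ch : Type) : Type where
  | var : ℕ → Tm Loc Ch
  | push : Tm Loc Ch → Loc → Tm Loc Ch → Tm Loc Ch
  | pop : Loc → Tm Loc Ch → Tm Loc Ch
  | choice : Ch → Tm Loc Ch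
  | caseOf : Tm Loc Ch → Ch → Tm Loc Ch → Tm Loc Ch
  | loop : Tm Loc Ch → Ch → Tm Loc Ch

namespace Tm

/-- Shift the free de Bruijn indices `≥ d` up by one. -/
def lift : Tm Loc Ch → ℕ → Tm Loc Ch
  | var n, d => if n < d then var n else var (n + 1)
  | push N a M, d => push (N.lift d) a (M.lift d)
  | pop a M, d => pop a (M.lift (d + 1))
  | choice i, _ => choice i
  | caseOf M i N, d => caseOf (M.lift d) i (N.lift d)
  | loop M i, d => loop (M.lift d) i

/-- Capture-avoiding substitution `{N/k}M` for the de Bruijn index `k`. -/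
def subst : Tm Loc Ch → ℕ → Tm Loc Ch → Tm Loc Ch
  | var n, k, N => if n = k then N else if n < k then var n else var (n - 1)
  | push P a M, k, N => push (P.subst k N) a (M.subst k N)
  | pop a M, k, N => pop a (M.subst (k + 1) (N.lift 0))
  | choice i, _, _ => choice i
  | caseOf M i P, k, N => caseOf (M.subst k N) i (P.subst k N)
  | loop M i, k, N => loop (M.subst k N) i

end Tm

/-- Top-level instances of the reduction rules. -/
inductive TopStep : Tm Loc Ch → Tm Loc Ch → Prop where
  | beta (N : Tm Loc Ch) (a : Loc) (M : Tm Loc Ch) :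
      TopStep (.push N a (.pop a M)) (M.subst 0 N)
  | passage (N : Tm Loc Ch) (a b : Loc) (M : Tm Loc Ch) (h : a ≠ b) :
      TopStep (.push N b (.pop a M)) (.pop a (.push (N.lift 0) b M))
  | select (i : Ch) (M : Tm Loc Ch) :
      TopStep (.caseOf (.choice i) i M) M
  | reject (i j : Ch) (M : Tm Loc Ch) (h : i ≠ j) :
      TopStep (.caseOf (.choice i) j M) (.choice i)
  | prefixPop (a : Loc) (N : Tm Loc Ch) (i : Ch) (M : Tm Loc Ch) :
      TopStep (.caseOf (.pop a N) i M) (.pop a (.caseOf N i (M.lift 0)))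
  | prefixPush (P : Tm Loc Ch) (a : Loc) (N : Tm Loc Ch) (i : Ch) (M : Tm Loc Ch) :
      TopStep (.caseOf (.push P a N) i M) (.push P a (.caseOf N i M))
  | assoc (P : Tm Loc Ch) (i : Ch) (N M : Tm Loc Ch) :
      TopStep (.caseOf (.caseOf P i N) i M) (.caseOf P i (.caseOf N i M))
  | unroll (M : Tm Loc Ch) (i : Ch) :
      TopStep (.loop M i) (.caseOf M i (.loop M i))

/-- Reduction: the closure of the rules under arbitrary contexts. -/
inductive Step : Tm Loc Ch → Tm Loc Ch → Prop where
  | base (M N : Tm Loc Ch) : TopStep M N → Step M N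
  | push_left (N N' : Tm Loc Ch) (a : Loc) (M : Tm Loc Ch) :
      Step N N' → Step (.push N a M) (.push N' a M)
  | push_right (N : Tm Loc Ch) (a : Loc) (M M' : Tm Loc Ch) :
      Step M M' → Step (.push N a M) (.push N a M')
  | pop_body (a : Loc) (M M' : Tm Loc Ch) :
      Step M M' → Step (.pop a M) (.pop a M')
  | case_left (M M' : Tm Loc Ch) (i : Ch) (N : Tm Loc Ch) :
      Step M M' → Step (.caseOf M i N) (.caseOf M' i N)
  | case_right (M : Tm Loc Ch) (i : Ch) (N N' : Tm Loc Ch) :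
      Step N N' → Step (.caseOf M i N) (.caseOf M i N')
  | loop_body (M M' : Tm Loc Ch) (i : Ch) :
      Step M M' → Step (.loop M i) (.loop M' i)

/-- Weak head reduction: the closure of the rules under application
(push) contexts only. -/
inductive WHStep : Tm Loc Ch → Tm Loc Ch → Prop where
  | base (M N : Tm Loc Ch) : TopStep M N → WHStep M N
  | push (P : Tm Loc Ch) (a : Loc) (M M' : Tm Loc Ch) :
      WHStep M M' → WHStep (.push P a M) (.push P a M')

variable [DecidableEq Loc]

/-- A memory: a family of stacks of terms indexed by the locations
(stacks are lists with the head as top). -/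
def Mem (Loc Ch : Type) := Loc → List (Tm Loc Ch)

/-- `S.push a N` pushes `N` onto the stack at location `a`. -/
def Mem.push (S : Mem Loc Ch) (a : Loc) (N : Tm Loc Ch) : Mem Loc Ch :=
  Function.update S a (N :: S a)

/-- The empty memory. -/
def Mem.empty : Mem Loc Ch := fun _ => []

/-- Big-step evaluation `(S, M) ⇓ (T, i)`. -/
inductive Eval : Mem Loc Ch → Tm Loc Ch → Mem Loc Ch → Ch → Prop where
  | choice (S : Mem Loc Ch) (i : Ch) : Eval S (.choice i) S i
  | push (S : Mem Loc Ch) (N : Tm Loc Ch) (a : Loc) (M : Tm Loc Ch) (T : Mem Loc Ch) (i : Ch) :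
      Eval (S.push a N) M T i → Eval S (.push N a M) T i
  | pop (S : Mem Loc Ch) (a : Loc) (N M : Tm Loc Ch) (T : Mem Loc Ch) (i : Ch) :
      Eval S (M.subst 0 N) T i → Eval (S.push a N) (.pop a M) T i
  | case_eq (R S T : Mem Loc Ch) (M N : Tm Loc Ch) (i j : Ch) :
      Eval R M S i → Eval S N T j → Eval R (.caseOf M i N) T j
  | case_ne (R T : Mem Loc Ch) (M N : Tm Loc Ch) (i j : Ch) (h : i ≠ j) :
      Eval R M T i → Eval R (.caseOf M j N) T i
  | loop_eq (R S T : Mem Loc Ch) (M : Tm Loc Ch) (i j : Ch) :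
      Eval R M S i → Eval S (.loop M i) T j → Eval R (.loop M i) T j
  | loop_ne (R T : Mem Loc Ch) (M : Tm Loc Ch) (i j : Ch) (h : i ≠ j) :
      Eval R M T i → Eval R (.loop M j) T i

lemma Tm.lift_subst (M : Tm Loc Ch) : ∀ d N, (M.lift d).subst d N = M := by
  induction M with
  | var n =>
    intro d N
    by_cases h : n < d
    · simp [Tm.lift, Tm.subst, h, Nat.ne_of_lt h]
    · have h1 : ¬ (n + 1 = d) := by omega
      have h2 : ¬ (n + 1 < d) := by omega
      simp [Tm.lift, Tm.subst, h, h1, h2]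
  | push P a M ihP ihM => intro d N; simp [Tm.lift, Tm.subst, ihP, ihM]
  | pop a M ih => intro d N; simp [Tm.lift, Tm.subst, ih]
  | choice i => intro d N; simp [Tm.lift, Tm.subst]
  | caseOf M i P ihM ihP => intro d N; simp [Tm.lift, Tm.subst, ihM, ihP]
  | loop M i ih => intro d N; simp [Tm.lift, Tm.subst, ih]

lemma Mem.push_inj {S S' : Mem Loc Ch} {a : Loc} {N N' : Tm Loc Ch}
    (h : S.push a N = S'.push a N') : S = S' ∧ N = N' := by
  have ha := congrFun h a
  simp [Mem.push, Function.update] at ha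
  refine ⟨funext fun b => ?_, ha.1⟩
  by_cases hb : b = a
  · subst hb; exact ha.2
  · have := congrFun h b
    simpa [Mem.push, Function.update, hb] using this

lemma Mem.push_comm (S : Mem Loc Ch) {a b : Loc} (hab : a ≠ b) (P N : Tm Loc Ch) :
    (S.push a P).push b N = (S.push b N).push a P := by
  funext c
  by_cases hc : c = a
  · subst hc; simp [Mem.push, Function.update, hab, Ne.symm hab]
  · by_cases hcb : c = b
    · subst hcb; simp [Mem.push, Function.update, hab, Ne.symm hab]
    · simp [Mem.push, Function.update, hc, hcb]

lemma Mem.push_swap {S S' : Mem Loc Ch} {a b : Loc} {N N' : Tm Loc Ch}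
    (hab : a ≠ b) (h : S.push b N = S'.push a N') :
    ∃ S₀ : Mem Loc Ch, S = S₀.push a N' ∧ S' = S₀.push b N := by
  have ha := congrFun h a
  have hb := congrFun h b
  simp [Mem.push, Function.update, hab, Ne.symm hab] at ha hb
  refine ⟨Function.update S a (S' a), ?_, ?_⟩
  · funext c
    rcases eq_or_ne c a with rfl | hc
    · simp [Mem.push, Function.update, ha]
    · simp [Mem.push, Function.update, hc]
  · funext c
    rcases eq_or_ne c a with rfl | hc
    · simp [Mem.push, Function.update, hab]
    · rcases eq_or_ne c b with rfl | hcb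
      · simp [Mem.push, Function.update, hc, ← hb]
      · have hcc := congrFun h c
        simp [Mem.push, Function.update, hc, hcb] at hcc
        simp [Mem.push, Function.update, hc, hcb, hcc]

lemma eval_choice_iff {S T : Mem Loc Ch} {j k : Ch} :
    Eval S (.choice j) T k ↔ T = S ∧ k = j := by
  constructor
  · intro h; cases h; exact ⟨rfl, rfl⟩
  · rintro ⟨rfl, rfl⟩; exact Eval.choice _ _

lemma eval_push_iff {S T : Mem Loc Ch} {N M : Tm Loc Ch} {a : Loc} {i : Ch} :
    Eval S (.push N a M) T i ↔ Eval (S.push a N) M T i := by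
  constructor
  · intro h; cases h; assumption
  · exact Eval.push S N a M T i

lemma eval_pop_iff {S T : Mem Loc Ch} {M : Tm Loc Ch} {a : Loc} {i : Ch} :
    Eval S (.pop a M) T i ↔ ∃ (S₀ : Mem Loc Ch) (P : Tm Loc Ch),
      S = S₀.push a P ∧ Eval S₀ (M.subst 0 P) T i := by
  constructor
  · intro h
    cases h with
    | pop S₀ _ P _ _ _ h => exact ⟨S₀, P, rfl, h⟩
  · rintro ⟨S₀, P, rfl, h⟩; exact Eval.pop S₀ a P M T i h

lemma eval_case_iff {R T : Mem Loc Ch} {M N : Tm Loc Ch} {lbl res : Ch} :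
    Eval R (.caseOf M lbl N) T res ↔
      (∃ S, Eval R M S lbl ∧ Eval S N T res) ∨ (res ≠ lbl ∧ Eval R M T res) := by
  constructor
  · intro h
    cases h with
    | case_eq R S T M N i j h1 h2 => exact Or.inl ⟨S, h1, h2⟩
    | case_ne R T M N i j hne h1 => exact Or.inr ⟨hne, h1⟩
  · rintro (⟨S, h1, h2⟩ | ⟨hne, h1⟩)
    · exact Eval.case_eq R S T M N lbl res h1 h2
    · exact Eval.case_ne R T M N res lbl hne h1

lemma eval_loop_iff {R T : Mem Loc Ch} {M : Tm Loc Ch} {lbl res : Ch} :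
    Eval R (.loop M lbl) T res ↔
      (∃ S, Eval R M S lbl ∧ Eval S (.loop M lbl) T res) ∨ (res ≠ lbl ∧ Eval R M T res) := by
  constructor
  · intro h
    cases h with
    | loop_eq R S T M i j h1 h2 => exact Or.inl ⟨S, h1, h2⟩
    | loop_ne R T M i j hne h1 => exact Or.inr ⟨hne, h1⟩
  · rintro (⟨S, h1, h2⟩ | ⟨hne, h1⟩)
    · exact Eval.loop_eq R S T M lbl res h1 h2
    · exact Eval.loop_ne R T M res lbl hne h1

lemma top_eval {M N : Tm Loc Ch} (h : TopStep M N) (S T : Mem Loc Ch) (i : Ch) :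
    Eval S M T i ↔ Eval S N T i := by
  cases h with
  | beta N a M =>
    constructor
    · intro h
      obtain ⟨S₀, P, hS, h⟩ := eval_pop_iff.mp (eval_push_iff.mp h)
      obtain ⟨rfl, rfl⟩ := Mem.push_inj hS
      exact h
    · intro h
      exact eval_push_iff.mpr (eval_pop_iff.mpr ⟨S, N, rfl, h⟩)
  | passage N a b M hab =>
    constructor
    · intro h
      obtain ⟨S₀, P, hS, h1⟩ := eval_pop_iff.mp (eval_push_iff.mp h)
      obtain ⟨S₁, hA, hB⟩ := Mem.push_swap hab hS
      refine eval_pop_iff.mpr ⟨S₁, P, hA, ?_⟩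
      simp only [Tm.subst, Tm.lift_subst]
      refine eval_push_iff.mpr ?_
      rw [← hB]
      exact h1
    · intro h
      obtain ⟨S₀, P, rfl, h1⟩ := eval_pop_iff.mp h
      simp only [Tm.subst, Tm.lift_subst] at h1
      have h2 := eval_push_iff.mp h1
      refine eval_push_iff.mpr ?_
      rw [Mem.push_comm S₀ hab P N]
      exact Eval.pop _ a P M T i h2
  | select j M =>
    constructor
    · intro h
      rcases eval_case_iff.mp h with ⟨S', h1, h2⟩ | ⟨hne, h1⟩
      · obtain ⟨rfl, -⟩ := eval_choice_iff.mp h1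
        exact h2
      · obtain ⟨rfl, rfl⟩ := eval_choice_iff.mp h1
        exact absurd rfl hne
    · intro h
      exact eval_case_iff.mpr (Or.inl ⟨S, Eval.choice _ _, h⟩)
  | reject j k M hne =>
    constructor
    · intro h
      rcases eval_case_iff.mp h with ⟨S', h1, h2⟩ | ⟨hres, h1⟩
      · obtain ⟨rfl, hkj⟩ := eval_choice_iff.mp h1
        exact absurd hkj.symm hne
      · exact h1
    · intro h
      obtain ⟨rfl, rfl⟩ := eval_choice_iff.mp h
      exact eval_case_iff.mpr (Or.inr ⟨hne, h⟩)
  | prefixPop a P j M =>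
    constructor
    · intro h
      rcases eval_case_iff.mp h with ⟨S', h1, h2⟩ | ⟨hne, h1⟩
      · obtain ⟨S₀, Q, rfl, hq⟩ := eval_pop_iff.mp h1
        refine eval_pop_iff.mpr ⟨S₀, Q, rfl, ?_⟩
        simp only [Tm.subst, Tm.lift_subst]
        exact eval_case_iff.mpr (Or.inl ⟨S', hq, h2⟩)
      · obtain ⟨S₀, Q, rfl, hq⟩ := eval_pop_iff.mp h1
        refine eval_pop_iff.mpr ⟨S₀, Q, rfl, ?_⟩
        simp only [Tm.subst, Tm.lift_subst]
        exact eval_case_iff.mpr (Or.inr ⟨hne, hq⟩)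
    · intro h
      obtain ⟨S₀, Q, rfl, h1⟩ := eval_pop_iff.mp h
      simp only [Tm.subst, Tm.lift_subst] at h1
      rcases eval_case_iff.mp h1 with ⟨S', ha, hb⟩ | ⟨hne, ha⟩
      · exact eval_case_iff.mpr (Or.inl ⟨S', eval_pop_iff.mpr ⟨S₀, Q, rfl, ha⟩, hb⟩)
      · exact eval_case_iff.mpr (Or.inr ⟨hne, eval_pop_iff.mpr ⟨S₀, Q, rfl, ha⟩⟩)
  | prefixPush P a Q j M =>
    constructor
    · intro h
      rcases eval_case_iff.mp h with ⟨S', h1, h2⟩ | ⟨hne, h1⟩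
      · exact eval_push_iff.mpr
          (eval_case_iff.mpr (Or.inl ⟨S', eval_push_iff.mp h1, h2⟩))
      · exact eval_push_iff.mpr
          (eval_case_iff.mpr (Or.inr ⟨hne, eval_push_iff.mp h1⟩))
    · intro h
      rcases eval_case_iff.mp (eval_push_iff.mp h) with ⟨S', h1, h2⟩ | ⟨hne, h1⟩
      · exact eval_case_iff.mpr (Or.inl ⟨S', eval_push_iff.mpr h1, h2⟩)
      · exact eval_case_iff.mpr (Or.inr ⟨hne, eval_push_iff.mpr h1⟩)
  | assoc P j Q M =>
    constructor
    · intro h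
      rcases eval_case_iff.mp h with ⟨S', h1, h2⟩ | ⟨hne, h1⟩
      · rcases eval_case_iff.mp h1 with ⟨S'', ha, hb⟩ | ⟨hne', ha⟩
        · exact eval_case_iff.mpr
            (Or.inl ⟨S'', ha, eval_case_iff.mpr (Or.inl ⟨S', hb, h2⟩)⟩)
        · exact absurd rfl hne'
      · rcases eval_case_iff.mp h1 with ⟨S'', ha, hb⟩ | ⟨hne', ha⟩
        · exact eval_case_iff.mpr
            (Or.inl ⟨S'', ha, eval_case_iff.mpr (Or.inr ⟨hne, hb⟩)⟩)
        · exact eval_case_iff.mpr (Or.inr ⟨hne', ha⟩)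
    · intro h
      rcases eval_case_iff.mp h with ⟨S', h1, h2⟩ | ⟨hne, h1⟩
      · rcases eval_case_iff.mp h2 with ⟨S'', ha, hb⟩ | ⟨hne', ha⟩
        · exact eval_case_iff.mpr
            (Or.inl ⟨S'', eval_case_iff.mpr (Or.inl ⟨S', h1, ha⟩), hb⟩)
        · exact eval_case_iff.mpr
            (Or.inr ⟨hne', eval_case_iff.mpr (Or.inl ⟨S', h1, ha⟩)⟩)
      · exact eval_case_iff.mpr
          (Or.inr ⟨hne, eval_case_iff.mpr (Or.inr ⟨hne, h1⟩)⟩)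
  | unroll M j =>
    constructor
    · intro h
      rcases eval_loop_iff.mp h with ⟨S', h1, h2⟩ | ⟨hne, h1⟩
      · exact eval_case_iff.mpr (Or.inl ⟨S', h1, h2⟩)
      · exact eval_case_iff.mpr (Or.inr ⟨hne, h1⟩)
    · intro h
      rcases eval_case_iff.mp h with ⟨S', h1, h2⟩ | ⟨hne, h1⟩
      · exact eval_loop_iff.mpr (Or.inl ⟨S', h1, h2⟩)
      · exact eval_loop_iff.mpr (Or.inr ⟨hne, h1⟩)

/-- Weak head reduction preserves and reflects evaluation. -/
theorem wh_preserves_and_reflects_eval (M N : Tm Loc Ch) (h : WHStep M N)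
    (S T : Mem Loc Ch) (i : Ch) :
    Eval S M T i ↔ Eval S N T i := by
  induction h generalizing S T with
  | base M N h => exact top_eval h S T i
  | push P a M M' _ ih =>
    constructor
    · intro h
      exact eval_push_iff.mpr ((ih _ _).mp (eval_push_iff.mp h))
    · intro h
      exact eval_push_iff.mpr ((ih _ _).mpr (eval_push_iff.mp h))
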